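/- Let X be a Banach space, (f_m)_{m≥0} a sequence of maps from the infinite binary tree T to X such that each f_m is 1-Lipschitz from (T,ρ) to X and ‖f_m(ε)‖ ≤ |ε| for all ε ∈ T. Define f : T → X by f(∅) = 0 and, for 2^m ≤ |ε| ≤ 2^{m+1}, f(ε) = λ f_m(ε) + (1-λ) f_{m+1}(ε) with λ = (2^{m+1} - |ε|)/2^m. Then f is 9-Lipschitz: ‖f(ε) - f(ε')‖ ≤ 9 ρ(ε,ε') for all ε, ε' ∈ T. -/

import Mathlib

/-- Longest common prefix of two `{-1,1}`-valued sequences (modeled as `List Bool`). -/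
def lcp : List Bool → List Bool → List Bool
  | a :: as, b :: bs => if a = b then a :: lcp as bs else []
  | _, _ => []

/-- The hyperbolic distance on the infinite binary tree `T`. -/
def rho (x y : List Bool) : ℕ :=
  (x.length - (lcp x y).length) + (y.length - (lcp x y).length)

lemma lcp_of_prefix : ∀ (p l : List Bool), p <+: l → lcp l p = p := by
  intro p
  induction p with
  | nil => intro l _; cases l <;> rfl
  | cons b bs ih =>
    intro l hp
    obtain ⟨t, rfl⟩ := hp
    simp only [List.cons_append, lcp, if_pos rfl]
    exact congrArg (List.cons b) (ih (bs ++ t) ⟨t, rfl⟩)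

lemma lcp_prefix_left : ∀ (a b : List Bool), lcp a b <+: a := by
  intro a
  induction a with
  | nil => intro b; cases b <;> exact List.nil_prefix
  | cons x xs ih =>
    intro b
    cases b with
    | nil => exact List.nil_prefix
    | cons y ys =>
      by_cases h : x = y
      · rw [show lcp (x :: xs) (y :: ys) = x :: lcp xs ys from by simp [lcp, h]]
        exact List.cons_prefix_cons.2 ⟨rfl, ih ys⟩
      · simp [lcp, h]

lemma lcp_prefix_right : ∀ (a b : List Bool), lcp a b <+: b := by
  intro a
  induction a with
  | nil => intro b; exact List.nil_prefix
  | cons x xs ih =>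
    intro b
    cases b with
    | nil => exact List.nil_prefix
    | cons y ys =>
      by_cases h : x = y
      · subst h
        rw [show lcp (x :: xs) (x :: ys) = x :: lcp xs ys from by simp [lcp]]
        exact List.cons_prefix_cons.2 ⟨rfl, ih ys⟩
      · simp [lcp, h]

lemma rho_dropLast (ε : List Bool) (h : ε ≠ []) : rho ε ε.dropLast = 1 := by
  have h1 : lcp ε ε.dropLast = ε.dropLast := lcp_of_prefix _ _ (List.dropLast_prefix ε)
  have h2 : ε.dropLast.length = ε.length - 1 := List.length_dropLast
  have h3 : 1 ≤ ε.length := List.length_pos_iff.2 h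
  unfold rho
  rw [h1, h2]
  omega

/-- Gluing `1`-Lipschitz maps `f_m` (with `‖f_m(ε)‖ ≤ |ε|`) by convex combinations along
dyadic scales produces a `9`-Lipschitz map for the hyperbolic metric `ρ`. -/
theorem glued_map_nine_lipschitz
    {X : Type*} [NormedAddCommGroup X] [NormedSpace ℝ X]
    (fm : ℕ → List Bool → X)
    (hlip : ∀ m (ε ε' : List Bool), ‖fm m ε - fm m ε'‖ ≤ (rho ε ε' : ℝ))
    (hbound : ∀ m (ε : List Bool), ‖fm m ε‖ ≤ (ε.length : ℝ))
    (f : List Bool → X) (hf0 : f [] = 0)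
    (hf : ∀ m (ε : List Bool), 2 ^ m ≤ ε.length → ε.length ≤ 2 ^ (m + 1) →
      f ε = (((2 : ℝ) ^ (m + 1) - ε.length) / 2 ^ m) • fm m ε +
        (1 - ((2 : ℝ) ^ (m + 1) - ε.length) / 2 ^ m) • fm (m + 1) ε) :
    ∀ ε ε' : List Bool, ‖f ε - f ε'‖ ≤ 9 * (rho ε ε' : ℝ) := by
  -- Step bound: moving to the parent changes `f` by at most 9.
  have step : ∀ ε : List Bool, ε ≠ [] → ‖f ε - f ε.dropLast‖ ≤ 9 := by
    intro ε hne
    have hn : 1 ≤ ε.length := List.length_pos_iff.2 hne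
    rcases eq_or_lt_of_le hn with h1 | h2
    · -- length 1 : parent is the root
      have hd : ε.dropLast = [] := by
        have : ε.dropLast.length = ε.length - 1 := List.length_dropLast
        rw [← h1] at this
        exact List.length_eq_zero_iff.mp (by omega)
      have hE : f ε = fm 0 ε := by
        rw [hf 0 ε (by omega) (by omega), ← h1]
        norm_num
      rw [hd, hf0, sub_zero, hE]
      calc ‖fm 0 ε‖ ≤ (ε.length : ℝ) := hbound 0 ε
        _ ≤ 9 := by rw [← h1]; norm_num
    · -- length n ≥ 2 : both `ε` and its parent lie in a common dyadic band
      set n := ε.length with hnn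
      have hn2 : 2 ≤ n := h2
      set m := Nat.log 2 (n - 1) with hm
      have hml : 2 ^ m ≤ n - 1 := Nat.pow_log_le_self 2 (by omega)
      have hmu : n - 1 < 2 ^ (m + 1) := Nat.lt_pow_succ_log_self (by norm_num) _
      have hdl : ε.dropLast.length = n - 1 := List.length_dropLast
      have hfe := hf m ε (by omega) (by omega)
      have hfe' := hf m ε.dropLast (by omega) (by omega)
      rw [hdl] at hfe'
      -- real versions
      have hcast : ((n - 1 : ℕ) : ℝ) = (n : ℝ) - 1 := by
        push_cast [Nat.cast_sub (by omega : 1 ≤ n)]; ring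
      have h2m : (0:ℝ) < 2 ^ m := by positivity
      set lam : ℝ := ((2 : ℝ) ^ (m + 1) - n) / 2 ^ m with hlam
      have hlam' : ((2 : ℝ) ^ (m + 1) - ((n - 1 : ℕ) : ℝ)) / 2 ^ m = lam + 1 / 2 ^ m := by
        rw [hcast, hlam]; field_simp; ring
      rw [hlam'] at hfe'
      -- decompose the difference
      have hdecomp : f ε - f ε.dropLast =
          lam • (fm m ε - fm m ε.dropLast) + (1 - lam) • (fm (m+1) ε - fm (m+1) ε.dropLast)
            + ((1:ℝ) / 2 ^ m) • (fm (m+1) ε.dropLast - fm m ε.dropLast) := by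
        rw [hfe, hfe']
        module
      -- bounds
      have hnuN : n ≤ 2 ^ (m + 1) := by omega
      have hnlN : 2 ^ m ≤ n := by omega
      have hnle : (n : ℝ) ≤ (2:ℝ) ^ (m + 1) := by exact_mod_cast hnuN
      have hnge : (2:ℝ) ^ m ≤ (n : ℝ) := by exact_mod_cast hnlN
      have hlam0 : 0 ≤ lam := by
        apply div_nonneg _ (le_of_lt h2m); linarith
      have hlam1 : lam ≤ 1 := by
        rw [hlam, div_le_one h2m]
        have : (2:ℝ) ^ (m+1) = 2 * 2 ^ m := by ring
        linarith
      have hrho : (rho ε ε.dropLast : ℝ) = 1 := by rw [rho_dropLast ε hne]; norm_num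
      have hA : ‖fm m ε - fm m ε.dropLast‖ ≤ 1 := by
        have := hlip m ε ε.dropLast; rwa [hrho] at this
      have hB : ‖fm (m+1) ε - fm (m+1) ε.dropLast‖ ≤ 1 := by
        have := hlip (m+1) ε ε.dropLast; rwa [hrho] at this
      have hlen' : ((ε.dropLast.length : ℕ) : ℝ) ≤ 2 * 2 ^ m := by
        rw [hdl, hcast]
        have : (2:ℝ) ^ (m+1) = 2 * 2 ^ m := by ring
        linarith
      have hC : ‖fm (m+1) ε.dropLast - fm m ε.dropLast‖ ≤ 4 * 2 ^ m := by
        calc ‖fm (m+1) ε.dropLast - fm m ε.dropLast‖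
            ≤ ‖fm (m+1) ε.dropLast‖ + ‖fm m ε.dropLast‖ := norm_sub_le _ _
          _ ≤ (ε.dropLast.length : ℝ) + (ε.dropLast.length : ℝ) :=
              add_le_add (hbound _ _) (hbound _ _)
          _ ≤ 4 * 2 ^ m := by linarith
      rw [hdecomp]
      have e1 : ‖lam • (fm m ε - fm m ε.dropLast)‖ = lam * ‖fm m ε - fm m ε.dropLast‖ := by
        rw [norm_smul, Real.norm_of_nonneg hlam0]
      have e2 : ‖(1 - lam) • (fm (m+1) ε - fm (m+1) ε.dropLast)‖
          = (1 - lam) * ‖fm (m+1) ε - fm (m+1) ε.dropLast‖ := by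
        rw [norm_smul, Real.norm_of_nonneg (by linarith)]
      have e3 : ‖((1:ℝ) / 2 ^ m) • (fm (m+1) ε.dropLast - fm m ε.dropLast)‖
          = (1 / 2 ^ m) * ‖fm (m+1) ε.dropLast - fm m ε.dropLast‖ := by
        rw [norm_smul, Real.norm_of_nonneg (by positivity)]
      have t1 : lam * ‖fm m ε - fm m ε.dropLast‖ ≤ lam * 1 :=
        mul_le_mul_of_nonneg_left hA hlam0
      have t2 : (1 - lam) * ‖fm (m+1) ε - fm (m+1) ε.dropLast‖ ≤ (1 - lam) * 1 :=
        mul_le_mul_of_nonneg_left hB (by linarith)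
      have t3 : (1 / 2 ^ m) * ‖fm (m+1) ε.dropLast - fm m ε.dropLast‖
          ≤ (1 / 2 ^ m) * (4 * 2 ^ m) :=
        mul_le_mul_of_nonneg_left hC (by positivity)
      have hfield : (1 / (2:ℝ) ^ m) * (4 * 2 ^ m) = 4 := by field_simp
      calc ‖lam • (fm m ε - fm m ε.dropLast) + (1 - lam) • (fm (m+1) ε - fm (m+1) ε.dropLast)
            + ((1:ℝ) / 2 ^ m) • (fm (m+1) ε.dropLast - fm m ε.dropLast)‖
          ≤ ‖lam • (fm m ε - fm m ε.dropLast)‖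
            + ‖(1 - lam) • (fm (m+1) ε - fm (m+1) ε.dropLast)‖
            + ‖((1:ℝ) / 2 ^ m) • (fm (m+1) ε.dropLast - fm m ε.dropLast)‖ :=
            (norm_add_le _ _).trans (by gcongr; exact norm_add_le _ _)
        _ ≤ 9 := by rw [e1, e2, e3]; nlinarith [t1, t2, t3]
  -- Chain bound along prefixes.
  have chain : ∀ (k : ℕ) (l p : List Bool), p <+: l → l.length ≤ p.length + k →
      ‖f l - f p‖ ≤ 9 * k := by
    intro k
    induction k with
    | zero =>
      intro l p hp hl
      have heq : p = l := hp.sublist.eq_of_length_le (by simpa using hl)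
      rw [heq]; simp
    | succ k ih =>
      intro l p hp hl
      by_cases hle : l.length ≤ p.length + k
      · calc ‖f l - f p‖ ≤ 9 * k := ih l p hp hle
          _ ≤ 9 * (k + 1 : ℕ) := by push_cast; linarith
      · have hlen : p.length < l.length := by omega
        obtain ⟨t, rfl⟩ := hp
        have ht : t ≠ [] := by
          intro h; rw [h] at hlen; simp at hlen
        have hne : p ++ t ≠ [] := by
          intro h; apply ht; exact (List.append_eq_nil_iff.mp h).2
        have hpd : p <+: (p ++ t).dropLast := by
          rw [List.dropLast_append_of_ne_nil ht]; exact ⟨t.dropLast, rfl⟩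
        have hld : (p ++ t).dropLast.length ≤ p.length + k := by
          rw [List.length_dropLast]; omega
        have hstep := step (p ++ t) hne
        have hih := ih _ p hpd hld
        calc ‖f (p ++ t) - f p‖
            ≤ ‖f (p ++ t) - f ((p ++ t).dropLast)‖ + ‖f ((p ++ t).dropLast) - f p‖ :=
              norm_sub_le_norm_sub_add_norm_sub _ _ _
          _ ≤ 9 + 9 * k := add_le_add hstep hih
          _ = 9 * (k + 1 : ℕ) := by push_cast; ring
  -- conclude
  intro ε ε'
  set δ := lcp ε ε' with hδ
  have hp1 : δ <+: ε := lcp_prefix_left ε ε'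
  have hp2 : δ <+: ε' := lcp_prefix_right ε ε'
  have hl1 : δ.length ≤ ε.length := hp1.length_le
  have hl2 : δ.length ≤ ε'.length := hp2.length_le
  have c1 := chain (ε.length - δ.length) ε δ hp1 (by omega)
  have c2 := chain (ε'.length - δ.length) ε' δ hp2 (by omega)
  have hrho : (rho ε ε' : ℝ)
      = ((ε.length - δ.length : ℕ) : ℝ) + ((ε'.length - δ.length : ℕ) : ℝ) := by
    unfold rho
    rw [← hδ]
    push_cast [Nat.cast_sub hl1, Nat.cast_sub hl2]
    ring
  calc ‖f ε - f ε'‖ ≤ ‖f ε - f δ‖ + ‖f δ - f ε'‖ :=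
        norm_sub_le_norm_sub_add_norm_sub _ _ _
    _ ≤ 9 * ((ε.length - δ.length : ℕ) : ℝ) + 9 * ((ε'.length - δ.length : ℕ) : ℝ) := by
        refine add_le_add c1 ?_
        rw [norm_sub_rev]; exact c2
    _ = 9 * (rho ε ε' : ℝ) := by rw [hrho]; ring
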